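/- Let φ, χ, ψ be pairwise distinct roots of x³ - r·x² - s·x - t = 0 with φ real and |χ| < |φ|, |ψ| < |φ|, and t ≠ 0. Then the generalized Tribonacci sequence satisfies lim_{n→∞} V_{n+1}/V_n = φ. -/

import Mathlib

set_option maxHeartbeats 2000000 in
theorem stmt_5 (r s t : ℝ) (ht : t ≠ 0) (φ : ℝ) (χ ψ : ℂ)
    (hfac : ∀ z : ℂ, z ^ 3 - (r : ℂ) * z ^ 2 - (s : ℂ) * z - (t : ℂ) =
      (z - (φ : ℂ)) * (z - χ) * (z - ψ))
    (hφχ : (φ : ℂ) ≠ χ) (hφψ : (φ : ℂ) ≠ ψ) (hχψ : χ ≠ ψ)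
    (hχ : ‖χ‖ < |φ|) (hψ : ‖ψ‖ < |φ|)
    (V : ℕ → ℝ) (hV0 : V 0 = 0) (hV1 : V 1 = 1) (hV2 : V 2 = r)
    (hV : ∀ n : ℕ, V (n + 3) = r * V (n + 2) + s * V (n + 1) + t * V n) :
    Filter.Tendsto (fun n : ℕ => V (n + 1) / V n) Filter.atTop (nhds φ) := by
  have hφ0 : (φ : ℂ) ≠ 0 := by
    have : 0 < |φ| := lt_of_le_of_lt (norm_nonneg χ) hχ
    simpa using fun h => by simp [h] at this
  -- root equations
  have hφr : (φ : ℂ) ^ 3 = r * (φ:ℂ) ^ 2 + s * φ + t := by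
    have h := hfac φ; rw [sub_self, zero_mul, zero_mul] at h; linear_combination h
  have hχr : χ ^ 3 = r * χ ^ 2 + s * χ + t := by
    have h := hfac χ; rw [sub_self, mul_zero, zero_mul] at h; linear_combination h
  have hψr : ψ ^ 3 = r * ψ ^ 2 + s * ψ + t := by
    have h := hfac ψ; rw [sub_self, mul_zero] at h; linear_combination h
  have hr : (r : ℂ) = φ + χ + ψ := by
    linear_combination (-1/2 : ℂ) * hfac 1 + (-1/2 : ℂ) * hfac (-1) + hfac 0
  have d1 : (φ:ℂ) - χ ≠ 0 := sub_ne_zero.mpr hφχ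
  have d2 : (φ:ℂ) - ψ ≠ 0 := sub_ne_zero.mpr hφψ
  have d3 : χ - ψ ≠ 0 := sub_ne_zero.mpr hχψ
  set A : ℂ := 1 / (((φ:ℂ) - χ) * ((φ:ℂ) - ψ)) with hA
  set B : ℂ := 1 / ((χ - φ) * (χ - ψ)) with hB
  set C : ℂ := 1 / ((ψ - φ) * (ψ - χ)) with hC
  have d1' : χ - (φ:ℂ) ≠ 0 := sub_ne_zero.mpr (Ne.symm hφχ)
  have d2' : ψ - (φ:ℂ) ≠ 0 := sub_ne_zero.mpr (Ne.symm hφψ)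
  have d3' : ψ - χ ≠ 0 := sub_ne_zero.mpr (Ne.symm hχψ)
  have hA0 : A ≠ 0 := by
    rw [hA]; exact one_div_ne_zero (mul_ne_zero d1 d2)
  have binet : ∀ n : ℕ, (V n : ℂ) = A * (φ:ℂ) ^ (n+1) + B * χ ^ (n+1) + C * ψ ^ (n+1) := by
    have key : ∀ n : ℕ, ((V n : ℂ) = A * (φ:ℂ) ^ (n+1) + B * χ ^ (n+1) + C * ψ ^ (n+1)) ∧
        ((V (n+1) : ℂ) = A * (φ:ℂ) ^ (n+2) + B * χ ^ (n+2) + C * ψ ^ (n+2)) ∧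
        ((V (n+2) : ℂ) = A * (φ:ℂ) ^ (n+3) + B * χ ^ (n+3) + C * ψ ^ (n+3)) := by
      intro n
      induction n with
      | zero =>
        refine ⟨?_, ?_, ?_⟩
        · rw [hV0]; rw [hA, hB, hC]; field_simp [d1, d2, d3, d1', d2', d3']; push_cast; ring
        · rw [hV1]; rw [hA, hB, hC]; field_simp [d1, d2, d3, d1', d2', d3']; push_cast; ring
        · rw [hV2]; rw [hA, hB, hC, hr]; field_simp [d1, d2, d3, d1', d2', d3']; ring
      | succ k ih =>
        obtain ⟨i0, i1, i2⟩ := ih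
        refine ⟨i1, i2, ?_⟩
        have hrec : ((V (k+3) : ℝ) : ℂ) = r * V (k+2) + s * V (k+1) + t * V k := by
          rw [hV k]; push_cast; ring
        rw [show k+1+2 = k+3 by ring, hrec, i0, i1, i2]
        linear_combination (-A * (φ:ℂ)^(k+1)) * hφr + (-B * χ^(k+1)) * hχr + (-C * ψ^(k+1)) * hψr
    exact fun n => (key n).1
  -- the perturbation
  set f : ℕ → ℂ := fun n => B / A * (χ / φ) ^ (n+1) + C / A * (ψ / φ) ^ (n+1) with hf
  have hVf : ∀ n : ℕ, (V n : ℂ) = A * (φ:ℂ) ^ (n+1) * (1 + f n) := by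
    intro n
    rw [binet n, hf]
    field_simp [hA0, hφ0]
    have e : (φ:ℂ) ^ n * ((φ:ℂ)⁻¹) ^ n = 1 := by rw [← mul_pow, mul_inv_cancel₀ hφ0, one_pow]
    have e2 : (φ:ℂ) * (φ:ℂ)⁻¹ = 1 := mul_inv_cancel₀ hφ0
    linear_combination (-(B*χ*χ^n + C*ψ*ψ^n)) * e2 + (-(B*χ*χ^n + C*ψ*ψ^n) * ((φ:ℂ) * (φ:ℂ)⁻¹)) * e
  have hratχ : ‖χ / φ‖ < 1 := by
    rw [norm_div, Complex.norm_real, Real.norm_eq_abs]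
    exact (div_lt_one (lt_of_le_of_lt (norm_nonneg χ) hχ)).mpr hχ
  have hratψ : ‖ψ / φ‖ < 1 := by
    rw [norm_div, Complex.norm_real, Real.norm_eq_abs]
    exact (div_lt_one (lt_of_le_of_lt (norm_nonneg ψ) hψ)).mpr hψ
  have hf0 : Filter.Tendsto f Filter.atTop (nhds 0) := by
    have h1 : Filter.Tendsto (fun n : ℕ => (χ/φ:ℂ) ^ (n+1)) Filter.atTop (nhds 0) :=
      (tendsto_pow_atTop_nhds_zero_of_norm_lt_one hratχ).comp (Filter.tendsto_add_atTop_nat 1)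
    have h2 : Filter.Tendsto (fun n : ℕ => (ψ/φ:ℂ) ^ (n+1)) Filter.atTop (nhds 0) :=
      (tendsto_pow_atTop_nhds_zero_of_norm_lt_one hratψ).comp (Filter.tendsto_add_atTop_nat 1)
    have := (h1.const_mul (B/A)).add (h2.const_mul (C/A))
    simpa using this
  have hg : Filter.Tendsto (fun n => 1 + f n) Filter.atTop (nhds 1) := by
    simpa using (tendsto_const_nhds (x := (1:ℂ)) (f := Filter.atTop)).add hf0
  -- eventually 1 + f n ≠ 0
  have hev : ∀ᶠ n in Filter.atTop, 1 + f n ≠ 0 := by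
    have : ∀ᶠ n in Filter.atTop, ‖f n‖ < 1 := by
      have := hf0.norm
      simp only [norm_zero] at this
      exact this.eventually_lt_const one_pos |>.mono (fun n h => by simpa using h)
    exact this.mono (fun n h h0 => by
      have : ‖f n‖ = 1 := by
        have : f n = -1 := by linear_combination h0
        simp [this]
      linarith)
  -- complex limit
  have hcplx : Filter.Tendsto (fun n : ℕ => (V (n+1) : ℂ) / (V n : ℂ)) Filter.atTop
      (nhds (φ:ℂ)) := by
    have hev' : ∀ᶠ n in Filter.atTop,
        (φ:ℂ) * ((1 + f (n+1)) / (1 + f n)) = (V (n+1) : ℂ) / (V n : ℂ) := by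
      filter_upwards [hev, (Filter.tendsto_add_atTop_nat 1).eventually hev] with n hn hn1
      rw [hVf n, hVf (n+1)]
      field_simp [hA0, hφ0, hn, hn1]
      ring
    have hlim : Filter.Tendsto (fun n : ℕ => (φ:ℂ) * ((1 + f (n+1)) / (1 + f n)))
        Filter.atTop (nhds (φ:ℂ)) := by
      have h1 : Filter.Tendsto (fun n : ℕ => 1 + f (n+1)) Filter.atTop (nhds 1) :=
        hg.comp (Filter.tendsto_add_atTop_nat 1)
      have := (h1.div hg one_ne_zero).const_mul (φ:ℂ)
      simpa using this
    exact hlim.congr' hev'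
  have hre := (Complex.continuous_re.tendsto _).comp hcplx
  have heq : (fun n : ℕ => V (n+1) / V n) = fun n => ((V (n+1) : ℂ) / (V n : ℂ)).re := by
    funext n; rw [← Complex.ofReal_div, Complex.ofReal_re]
  rw [heq]
  simpa [Function.comp_def] using hre
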